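/- For every real number M > 0 and every s < 1, the Schwarzschild radius function satisfies the two-sided bound 8M²·(1-s)·exp(-r_M(s)/(2M)) ≤ r_M(s)² ≤ 8M²·(1-s). -/

import Mathlib

/-- The Kruskal relation function `f_M(ρ) = (1 - ρ/(2M))·exp(ρ/(2M))`. -/
noncomputable def fM (M ρ : ℝ) : ℝ := (1 - ρ / (2 * M)) * Real.exp (ρ / (2 * M))

lemma aux_exp_neg_le (x : ℝ) (hx : 0 ≤ x) :
    Real.exp (-x) ≤ 1 - x + x ^ 2 / 2 := by
  set F : ℝ → ℝ := fun t => 1 - t + t ^ 2 / 2 - Real.exp (-t) with hF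
  have hderiv : ∀ t : ℝ, HasDerivAt F (-1 + t + Real.exp (-t)) t := by
    intro t
    have h1 : HasDerivAt (fun t : ℝ => Real.exp (-t)) (-Real.exp (-t)) t := by
      simpa [Function.comp_def] using (Real.hasDerivAt_exp (-t)).comp t (hasDerivAt_neg t)
    have h2 := ((hasDerivAt_const t (1:ℝ)).sub (hasDerivAt_id t)).add
      ((hasDerivAt_pow 2 t).div_const 2)
    have := h2.sub h1
    refine this.congr_deriv ?_
    ring
  have hmono : MonotoneOn F (Set.Ici 0) := by
    apply monotoneOn_of_deriv_nonneg (convex_Ici 0)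
    · exact Continuous.continuousOn (by continuity)
    · intro t _
      exact (hderiv t).differentiableAt.differentiableWithinAt
    · intro t ht
      simp only [interior_Ici, Set.mem_Ioi] at ht
      rw [(hderiv t).deriv]
      have := Real.add_one_le_exp (-t)
      linarith
  have h0 : F 0 ≤ F x := hmono (le_refl (0:ℝ)) hx hx
  simp [hF] at h0
  linarith

lemma aux_one_sub_mul_exp_le (x : ℝ) (hx : 0 ≤ x) :
    (1 - x) * Real.exp x ≤ 1 - x ^ 2 / 2 := by
  set F : ℝ → ℝ := fun t => 1 - t ^ 2 / 2 - (1 - t) * Real.exp t with hF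
  have hderiv : ∀ t : ℝ, HasDerivAt F (t * (Real.exp t - 1)) t := by
    intro t
    have h1 := ((hasDerivAt_const t (1:ℝ)).sub (hasDerivAt_id t)).mul
      (Real.hasDerivAt_exp t)
    have h2 := (hasDerivAt_const t (1:ℝ)).sub ((hasDerivAt_pow 2 t).div_const 2)
    have := h2.sub h1
    refine this.congr_deriv ?_
    simp only [Pi.sub_apply, id]
    ring
  have hmono : MonotoneOn F (Set.Ici 0) := by
    apply monotoneOn_of_deriv_nonneg (convex_Ici 0)
    · exact Continuous.continuousOn (by continuity)
    · intro t _
      exact (hderiv t).differentiableAt.differentiableWithinAt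
    · intro t ht
      simp only [interior_Ici, Set.mem_Ioi] at ht
      rw [(hderiv t).deriv]
      have h1 : (1 : ℝ) ≤ Real.exp t := Real.one_le_exp ht.le
      nlinarith
  have h0 : F 0 ≤ F x := hmono (le_refl (0:ℝ)) hx hx
  simp [hF] at h0
  linarith

/-- For every `M > 0` and every `s < 1`, the Schwarzschild radius function `r_M`
(characterized by `r_M(s) > 0` and `f_M(r_M(s)) = s` for all `s < 1`) satisfies
`8M²·(1-s)·exp(-r_M(s)/(2M)) ≤ r_M(s)² ≤ 8M²·(1-s)`. -/
theorem rM_two_sided_bound (M : ℝ) (hM : 0 < M) (rM : ℝ → ℝ)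
    (hrM : ∀ s : ℝ, s < 1 → 0 < rM s ∧ fM M (rM s) = s)
    (s : ℝ) (hs : s < 1) :
    8 * M ^ 2 * (1 - s) * Real.exp (-(rM s) / (2 * M)) ≤ (rM s) ^ 2 ∧
      (rM s) ^ 2 ≤ 8 * M ^ 2 * (1 - s) := by
  obtain ⟨hr, hf⟩ := hrM s hs
  set r := rM s
  set x := r / (2 * M) with hxdef
  have hx : 0 < x := div_pos hr (by linarith)
  have hrx : r = 2 * M * x := by
    rw [hxdef]; field_simp
  have hsx : s = (1 - x) * Real.exp x := by
    rw [← hf]; rfl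
  have hneg : -r / (2 * M) = -x := by
    rw [hxdef]; ring
  rw [hneg, hrx, hsx]
  have h1 := aux_exp_neg_le x hx.le
  have h2 := aux_one_sub_mul_exp_le x hx.le
  have hprod : Real.exp (-x) * Real.exp x = 1 := by
    rw [← Real.exp_add]; simp
  have h8 : (0:ℝ) ≤ 8 * M ^ 2 := by positivity
  constructor
  · have hE : (1 - (1 - x) * Real.exp x) * Real.exp (-x)
        = Real.exp (-x) - (1 - x) := by
      linear_combination (x - 1) * hprod
    have key : (1 - (1 - x) * Real.exp x) * Real.exp (-x) ≤ x ^ 2 / 2 := by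
      rw [hE]; linarith
    nlinarith [mul_le_mul_of_nonneg_left key h8]
  · nlinarith [mul_le_mul_of_nonneg_left h2 h8]
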